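/- Let F be the free *-algebra on one generator x and let A be the quotient of F by the two-sided ideal generated by x² and x*² (a star-closed ideal, so A is a *-algebra). Then A is C*-representable: there exist a complex Hilbert space H and an injective *-representation of A on H. -/

import Mathlib

noncomputable section FreeStarAlgebraSection

/-- Letters of the free `*`-algebra on `n` generators: `Sum.inl i` is the generator `xᵢ`
and `Sum.inr i` is its formal adjoint `xᵢ*`. -/
abbrev FreeStarLetter (n : ℕ) : Type := Fin n ⊕ Fin n

/-- The free `*`-algebra on `n` generators: the free associative unital `ℂ`-algebra on the
`2n` generators `x₁, …, x_n, x₁*, …, x_n*`, realized as the monoid algebra over `ℂ` of the free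
monoid on the corresponding `2n` letters.  The involution (defined below) is the unique
conjugate-linear anti-automorphism exchanging `xᵢ` and `xᵢ*`. -/
abbrev FreeStarAlgebra (n : ℕ) : Type := MonoidAlgebra ℂ (FreeMonoid (FreeStarLetter n))

namespace FreeStarAlgebra

variable {n : ℕ}

/-- The involution on words: reverse the word and exchange the letters `xᵢ` and `xᵢ*`. -/
def wordStar (w : FreeMonoid (FreeStarLetter n)) : FreeMonoid (FreeStarLetter n) :=
  star (FreeMonoid.map Sum.swap w)

@[simp] theorem wordStar_mul (u v : FreeMonoid (FreeStarLetter n)) :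
    wordStar (u * v) = wordStar v * wordStar u := by
  simp [wordStar, map_mul, star_mul]

@[simp] theorem wordStar_one : wordStar (1 : FreeMonoid (FreeStarLetter n)) = 1 := by
  simp [wordStar]

@[simp] theorem wordStar_of (v : FreeStarLetter n) :
    wordStar (FreeMonoid.of v) = FreeMonoid.of v.swap := by
  simp [wordStar]

@[simp] theorem wordStar_wordStar (w : FreeMonoid (FreeStarLetter n)) :
    wordStar (wordStar w) = w := by
  induction w using FreeMonoid.recOn with
  | one => simp
  | of_mul x xs ih => simp [ih]

/-- The involution of the free `*`-algebra as an additive map: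
`∑ c_w • w  ↦  ∑ conj (c_w) • w*`. -/
def starAddHom : FreeStarAlgebra n →+ FreeStarAlgebra n :=
  (Finsupp.liftAddHom fun w =>
    (MonoidAlgebra.singleAddHom (wordStar w)).comp (starAddEquiv (R := ℂ)).toAddMonoidHom).comp
    MonoidAlgebra.coeffAddEquiv.toAddMonoidHom

theorem starAddHom_single (w : FreeMonoid (FreeStarLetter n)) (c : ℂ) :
    starAddHom (MonoidAlgebra.single w c) =
      MonoidAlgebra.single (wordStar w) (starRingEnd ℂ c) :=
  Finsupp.liftAddHom_apply_single (fun w =>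
    (MonoidAlgebra.singleAddHom (wordStar w)).comp (starAddEquiv (R := ℂ)).toAddMonoidHom) w c

instance instStarRing : StarRing (FreeStarAlgebra n) where
  star f := starAddHom f
  star_involutive f := by
    show starAddHom (starAddHom f) = f
    induction f using MonoidAlgebra.induction_linear with
    | zero => simp
    | add f g hf hg => simp [map_add, hf, hg]
    | single w c => simp [starAddHom_single]
  star_add f g := by
    show starAddHom (f + g) = starAddHom f + starAddHom g
    simp [map_add]
  star_mul f g := by
    show starAddHom (f * g) = starAddHom g * starAddHom f
    induction f using MonoidAlgebra.induction_linear with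
    | zero => simp
    | add f₁ f₂ h₁ h₂ => simp [add_mul, mul_add, map_add, h₁, h₂]
    | single w c =>
      induction g using MonoidAlgebra.induction_linear with
      | zero => simp
      | add g₁ g₂ h₁ h₂ => simp [add_mul, mul_add, map_add, h₁, h₂]
      | single w' c' =>
        rw [MonoidAlgebra.single_mul_single, starAddHom_single, starAddHom_single,
          starAddHom_single, MonoidAlgebra.single_mul_single]
        simp [wordStar, map_mul, star_mul, mul_comm]

@[simp] theorem star_single (w : FreeMonoid (FreeStarLetter n)) (c : ℂ) :
    star (MonoidAlgebra.single w c : FreeStarAlgebra n) =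
      MonoidAlgebra.single (wordStar w) (starRingEnd ℂ c) :=
  starAddHom_single w c

instance instStarModule : StarModule ℂ (FreeStarAlgebra n) where
  star_smul c f := by
    show starAddHom (c • f) = starRingEnd ℂ c • starAddHom f
    induction f using MonoidAlgebra.induction_linear with
    | zero => simp
    | add f g hf hg => simp [smul_add, map_add, hf, hg]
    | single w c' =>
      rw [MonoidAlgebra.smul_single, starAddHom_single, starAddHom_single, MonoidAlgebra.smul_single]
      simp [smul_eq_mul]

/-- The `i`-th generator `xᵢ` of the free `*`-algebra. -/
def gen (n : ℕ) (i : Fin n) : FreeStarAlgebra n :=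
  MonoidAlgebra.single (FreeMonoid.of (Sum.inl i)) 1

@[simp] theorem star_gen (i : Fin n) :
    star (gen n i) = MonoidAlgebra.single (FreeMonoid.of (Sum.inr i)) 1 := by
  simp [gen]

end FreeStarAlgebra
end FreeStarAlgebraSection

section CStarRep

variable (A : Type) [Ring A] [Algebra ℂ A] [Star A]

/-- `A` is C*-representable: there is an injective `*`-representation of `A` by bounded
operators on some complex Hilbert space. -/
def CStarRepresentable : Prop :=
  ∃ (H : Type) (_ : NormedAddCommGroup H) (_ : InnerProductSpace ℂ H) (_ : CompleteSpace H)
    (π : A →⋆ₐ[ℂ] (H →L[ℂ] H)), Function.Injective π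

end CStarRep

noncomputable section Stmt16
open FreeStarAlgebra

/-- The generator `x` of the free `*`-algebra on one generator. -/
def x : FreeStarAlgebra 1 := gen 1 0

/-- The relations `x² = 0` and `x*² = 0`. -/
def rel : FreeStarAlgebra 1 → FreeStarAlgebra 1 → Prop :=
  fun a b => (a = x * x ∨ a = star x * star x) ∧ b = 0

theorem rel_star : ∀ a b, rel a b → rel (star a) (star b) := by
  rintro a b ⟨(rfl | rfl), rfl⟩ <;>
    exact ⟨by simp [star_mul], by simp⟩

/-- The `*`-algebra `A = ℂ⟨x, x* | x² = 0, x*² = 0⟩`, the quotient of the free `*`-algebra on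
one generator by the star-closed two-sided ideal generated by `x²` and `x*²`. -/
abbrev Axx : Type := RingQuot rel

instance : StarRing Axx := RingQuot.starRing rel rel_star

/-! ## Auxiliary construction: a concrete representation on `ℓ²(ℕ × Bool)` -/

open scoped ENNReal

abbrev Hsp : Type := lp (fun _ : ℕ × Bool => ℂ) 2

namespace Hsp

def t (n : ℕ) : ℂ := ((n : ℂ) + 1)⁻¹

lemma t_norm_le (n : ℕ) : ‖t n‖ ≤ 1 := by
  rw [t, norm_inv]
  rw [show ((n:ℂ)+1) = ((n+1 : ℕ) : ℂ) by push_cast; ring]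
  rw [Complex.norm_natCast]
  rw [inv_le_one_iff₀]
  right; exact_mod_cast Nat.one_le_iff_ne_zero.2 (Nat.succ_ne_zero n)

lemma t_ne_zero (n : ℕ) : t n ≠ 0 :=
  inv_ne_zero (Nat.cast_add_one_ne_zero n)

lemma t_injective : Function.Injective t := by
  intro a b h
  rw [t, t, inv_inj] at h
  have : (a : ℂ) = b := by linear_combination h
  exact_mod_cast this

lemma t_conj (n : ℕ) : (starRingEnd ℂ) (t n) = t n := by
  rw [t, map_inv₀, map_add, Complex.conj_natCast, map_one]

/-- the bit-flip permutation of the index set -/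
def σ : (ℕ × Bool) ≃ (ℕ × Bool) :=
  (Equiv.refl ℕ).prodCongr (Function.Involutive.toPerm not Bool.not_not)

@[simp] lemma σ_apply (n : ℕ) (b : Bool) : σ (n, b) = (n, !b) := rfl

/-- raw shift-type map: `(shiftFun c f) (n, c) = t n * f (n, !c)`, other component `0`. -/
def shiftFun (c : Bool) (f : ℕ × Bool → ℂ) : ℕ × Bool → ℂ :=
  fun i => if i.2 = c then t i.1 * f (i.1, !i.2) else 0

lemma shiftFun_norm_le (c : Bool) (f : ℕ × Bool → ℂ) (i : ℕ × Bool) :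
    ‖shiftFun c f i‖ ≤ ‖f (σ i)‖ := by
  rw [shiftFun]
  split
  · rw [norm_mul]
    exact mul_le_of_le_one_left (norm_nonneg _) (t_norm_le _)
  · simp

lemma memℓp_shiftFun (c : Bool) (f : Hsp) : Memℓp (shiftFun c f) 2 := by
  have hf : Summable fun i => ‖(f : ℕ × Bool → ℂ) i‖ ^ (2 : ℝ≥0∞).toReal :=
    (lp.memℓp f).summable (by norm_num)
  have hσ : Summable fun i => ‖(f : ℕ × Bool → ℂ) (σ i)‖ ^ (2 : ℝ≥0∞).toReal :=
    σ.summable_iff.2 hf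
  refine memℓp_gen (Summable.of_nonneg_of_le (fun i => ?_) (fun i => ?_) hσ)
  · positivity
  · exact Real.rpow_le_rpow (norm_nonneg _) (shiftFun_norm_le c f i) ENNReal.toReal_nonneg

/-- The shift operator as a linear map on `Hsp`. -/
def shiftL (c : Bool) : Hsp →ₗ[ℂ] Hsp where
  toFun f := ⟨shiftFun c f, memℓp_shiftFun c f⟩
  map_add' f g := by
    ext i
    show shiftFun c (⇑f + ⇑g) i = shiftFun c f i + shiftFun c g i
    simp only [shiftFun, Pi.add_apply]
    split <;> ring
  map_smul' a f := by
    ext i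
    show shiftFun c (a • ⇑f) i = a * shiftFun c f i
    simp only [shiftFun, Pi.smul_apply, smul_eq_mul]
    split <;> ring

lemma shiftL_norm (c : Bool) (f : Hsp) : ‖shiftL c f‖ ≤ 1 * ‖f‖ := by
  rw [one_mul]
  have hp : (0:ℝ) < (2 : ℝ≥0∞).toReal := by norm_num
  have hle : ‖shiftL c f‖ ^ (2 : ℝ≥0∞).toReal ≤ ‖f‖ ^ (2 : ℝ≥0∞).toReal := by
    rw [lp.norm_rpow_eq_tsum hp (shiftL c f), lp.norm_rpow_eq_tsum hp f]
    have hσ : ∑' i, ‖(f : ℕ × Bool → ℂ) i‖ ^ (2 : ℝ≥0∞).toReal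
        = ∑' i, ‖(f : ℕ × Bool → ℂ) (σ i)‖ ^ (2 : ℝ≥0∞).toReal :=
      (σ.tsum_eq (f := fun i => ‖(f : ℕ × Bool → ℂ) i‖ ^ (2 : ℝ≥0∞).toReal)).symm
    rw [hσ]
    refine Summable.tsum_le_tsum (fun i => ?_) ((lp.memℓp _).summable hp)
      (σ.summable_iff.2 ((lp.memℓp f).summable hp))
    have hc : (shiftL c f : ℕ × Bool → ℂ) i = shiftFun c f i := rfl
    rw [hc]
    exact Real.rpow_le_rpow (norm_nonneg _) (shiftFun_norm_le c f i) ENNReal.toReal_nonneg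
  exact (Real.rpow_le_rpow_iff (norm_nonneg _) (norm_nonneg _) hp).1 hle

/-- The shift operator as a continuous linear map. -/
def shift (c : Bool) : Hsp →L[ℂ] Hsp :=
  (shiftL c).mkContinuous 1 (shiftL_norm c)

lemma shift_apply (c : Bool) (f : Hsp) (i : ℕ × Bool) :
    (shift c f : ℕ × Bool → ℂ) i
      = if i.2 = c then t i.1 * (f : ℕ × Bool → ℂ) (i.1, !i.2) else 0 := rfl

/-- adjoint of shift -/
lemma shift_adjoint (c : Bool) : ContinuousLinearMap.adjoint (shift c) = shift (!c) := by
  symm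
  rw [ContinuousLinearMap.eq_adjoint_iff]
  intro f g
  rw [lp.inner_eq_tsum, lp.inner_eq_tsum, ← σ.tsum_eq]
  congr 1
  funext i
  obtain ⟨n, b⟩ := i
  rw [RCLike.inner_apply', RCLike.inner_apply']
  show (starRingEnd ℂ) ((shift (!c) f : ℕ × Bool → ℂ) (n, !b)) * (g : ℕ × Bool → ℂ) (n, !b)
      = (starRingEnd ℂ) ((f : ℕ × Bool → ℂ) (n, b)) * (shift c g : ℕ × Bool → ℂ) (n, b)
  rw [shift_apply, shift_apply]
  cases b <;> cases c <;> simp [map_mul, t_conj] <;> ring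

/-! ### letters and the single-block dynamics -/

abbrev L1 : Type := Fin 1 ⊕ Fin 1

def startBit : L1 → Bool
  | .inl _ => true
  | .inr _ => false

lemma startBit_inj : Function.Injective startBit := by
  rintro (i | i) (j | j) h <;> simp [startBit] at h ⊢ <;> exact Subsingleton.elim i j

lemma startBit_ne {a a' : L1} (h : a ≠ a') : startBit a = !startBit a' := by
  rcases a with i | i <;> rcases a' with j | j
  · exact absurd (congrArg Sum.inl (Subsingleton.elim i j)) h
  · rfl
  · rfl
  · exact absurd (congrArg Sum.inr (Subsingleton.elim i j)) h

def step (a : L1) (b : Bool) : Option Bool :=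
  if b = startBit a then some (!b) else none

def act : List L1 → Bool → Option Bool
  | [], b => some b
  | a :: w, b => (act w b).bind fun c => step a c

@[simp] lemma act_nil (b : Bool) : act [] b = some b := rfl

@[simp] lemma act_cons (a : L1) (w : List L1) (b : Bool) :
    act (a :: w) b = (act w b).bind fun c => step a c := rfl

/-- On an alternating nonempty word, starting from the bit matched by the last letter,
the action survives and ends at `!startBit (head)`. -/
lemma act_alt : ∀ (r : List L1) (a : L1), (a :: r).Chain' (· ≠ ·) →
    act (a :: r) (startBit ((a :: r).getLast (by simp))) = some (!startBit a) := by
  intro r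
  induction r with
  | nil => intro a _; simp [act, step]
  | cons a' r ih =>
    intro a h
    rw [List.Chain', List.isChain_cons_cons] at h
    have hgl : ((a :: a' :: r).getLast (by simp)) = ((a' :: r).getLast (by simp)) :=
      List.getLast_cons (by simp)
    rw [hgl, act_cons, ih a' h.2]
    have hs : startBit a = !startBit a' := startBit_ne h.1
    simp [step, hs]

lemma act_alt_inj : ∀ (l l' : List L1) (b c : Bool), l.Chain' (· ≠ ·) → l'.Chain' (· ≠ ·) →
    act l b = some c → act l' b = some c → l.length = l'.length → l = l' := by
  intro l
  induction l with
  | nil =>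
    intro l' b c _ _ _ _ hlen
    exact (List.length_eq_zero_iff.1 hlen.symm).symm
  | cons a r ih =>
    intro l' b c hc hc' ha ha' hlen
    rcases l' with _ | ⟨a', r'⟩
    · simp at hlen
    rw [act_cons] at ha ha'
    rcases hd : act r b with _ | d
    · rw [hd] at ha; simp at ha
    rcases hd' : act r' b with _ | d'
    · rw [hd'] at ha'; simp at ha'
    rw [hd] at ha; rw [hd'] at ha'
    simp only [Option.bind_some] at ha ha'
    rw [step] at ha ha'
    split at ha; swap; · simp at ha
    split at ha'; swap; · simp at ha'
    rename_i h1 h2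
    have hc1 : c = !d := (Option.some_injective _ ha).symm
    have hc2 : c = !d' := (Option.some_injective _ ha').symm
    have hdd : d = d' := by
      have := hc1 ▸ hc2; simpa using this
    have haa : a = a' := startBit_inj (by rw [← h1, ← h2, hdd])
    subst haa
    have hr : r = r' := by
      refine ih r' b d (List.isChain_cons.1 hc).2 (List.isChain_cons.1 hc').2
        hd (hdd ▸ hd') (by simpa using hlen)
    rw [hr]

/-! ### basis vectors and word action -/

def e (n : ℕ) (b : Bool) : Hsp := lp.single 2 (n, b) (1 : ℂ)

lemma e_apply (n : ℕ) (b : Bool) (i : ℕ × Bool) :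
    (e n b : ℕ × Bool → ℂ) i = if i = (n, b) then 1 else 0 := by
  rw [e, lp.single_apply]
  split
  · rename_i h; subst h; exact Pi.single_eq_same _ _
  · rename_i h; exact Pi.single_eq_of_ne h _

lemma shift_e_dead (c : Bool) (n : ℕ) : shift c (e n c) = 0 := by
  ext i
  obtain ⟨m, d⟩ := i
  rw [shift_apply]
  have : ((0 : Hsp) : ℕ × Bool → ℂ) (m, d) = 0 := by
    rw [lp.coeFn_zero]; rfl
  rw [this, e_apply]
  rcases c <;> rcases d <;> simp

lemma shift_e_live (c : Bool) (n : ℕ) : shift c (e n (!c)) = t n • e n c := by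
  ext i
  obtain ⟨m, d⟩ := i
  rw [shift_apply]
  have : ((t n • e n c : Hsp) : ℕ × Bool → ℂ) (m, d) = t n * (e n c : ℕ × Bool → ℂ) (m, d) := by
    rw [lp.coeFn_smul]; rfl
  rw [this, e_apply, e_apply]
  by_cases hmn : m = n <;> rcases c <;> rcases d <;> simp_all

def letterOp (a : L1) : Hsp →L[ℂ] Hsp := shift (!startBit a)

lemma letterOp_e (a : L1) (n : ℕ) (b : Bool) :
    letterOp a (e n b) = (step a b).elim 0 (fun c => t n • e n c) := by
  rw [letterOp, step]
  by_cases hb : b = startBit a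
  · subst hb
    rw [if_pos rfl]
    have : (!(!startBit a)) = startBit a := Bool.not_not _
    calc shift (!startBit a) (e n (startBit a))
        = shift (!startBit a) (e n (!(!startBit a))) := by rw [this]
      _ = t n • e n (!startBit a) := shift_e_live _ n
      _ = (some (!startBit a)).elim 0 (fun c => t n • e n c) := rfl
      _ = _ := by rw [← this]
  · have hb' : b = !startBit a := by
      rcases b <;> rcases hsb : startBit a <;> simp_all
    rw [if_neg hb, hb']
    exact shift_e_dead _ n

/-- The multiplicative lift of `letterOp` to the free monoid. -/
def Φ : FreeMonoid L1 →* (Hsp →L[ℂ] Hsp) := FreeMonoid.lift letterOp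

lemma Phi_e (w : FreeMonoid L1) (n : ℕ) (b : Bool) :
    Φ w (e n b) = (t n) ^ (FreeMonoid.toList w).length •
      (act (FreeMonoid.toList w) b).elim 0 (e n) := by
  induction w using FreeMonoid.recOn with
  | one => simp [Φ]
  | of_mul a xs ih =>
    have hl : FreeMonoid.toList (FreeMonoid.of a * xs) = a :: FreeMonoid.toList xs := rfl
    rw [hl, map_mul, ContinuousLinearMap.mul_apply, ih, map_smul]
    rw [Φ, FreeMonoid.lift_eval_of]
    rcases hact : act (FreeMonoid.toList xs) b with _ | c
    · simp [hact]
    · simp only [Option.elim, act_cons, hact, Option.bind_some]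
      rw [letterOp_e]
      rcases hstep : step a c with _ | c'
      · simp
      · simp only [Option.elim]
        rw [smul_smul, List.length_cons, pow_succ, mul_comm]


/-! ### the representation of the free star algebra -/

/-- The algebra map `π` on the free star algebra. -/
def piFree : FreeStarAlgebra 1 →ₐ[ℂ] (Hsp →L[ℂ] Hsp) :=
  MonoidAlgebra.lift ℂ (Hsp →L[ℂ] Hsp) (FreeMonoid (FreeStarLetter 1)) Φ

lemma piFree_single (w : FreeMonoid (FreeStarLetter 1)) (c : ℂ) :
    piFree (MonoidAlgebra.single w c) = c • Φ w := by
  rw [piFree, MonoidAlgebra.lift_single]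

/-- coordinate evaluation as an additive monoid hom -/
def coordHom (i : ℕ × Bool) : Hsp →+ ℂ where
  toFun g := g i
  map_zero' := rfl
  map_add' _ _ := rfl

lemma eval_formula (f : FreeStarAlgebra 1) (n : ℕ) (b c : Bool) :
    ((piFree f) (e n b) : ℕ × Bool → ℂ) (n, c)
      = f.coeff.sum fun w cf =>
          if act (FreeMonoid.toList w) b = some c
          then cf * t n ^ (FreeMonoid.toList w).length else 0 := by
  have h1 : piFree f = f.coeff.sum fun w cf => cf • Φ w := by
    rw [piFree, MonoidAlgebra.lift_apply]
  rw [h1, Finsupp.sum, Finsupp.sum, ContinuousLinearMap.sum_apply]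
  rw [show ((∑ w ∈ f.coeff.support, ((f.coeff w • Φ w) (e n b)) : Hsp) : ℕ × Bool → ℂ) (n, c)
      = coordHom (n, c) (∑ w ∈ f.coeff.support, ((f.coeff w • Φ w) (e n b))) from rfl, map_sum]
  refine Finset.sum_congr rfl fun w _ => ?_
  rw [ContinuousLinearMap.smul_apply]
  have hsm : coordHom (n, c) (f.coeff w • Φ w (e n b))
      = f.coeff w * ((Φ w (e n b) : ℕ × Bool → ℂ) (n, c)) := by
    show ((f.coeff w • Φ w (e n b) : Hsp) : ℕ × Bool → ℂ) (n, c) = _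
    rw [lp.coeFn_smul]; rfl
  rw [hsm, Phi_e]
  rcases hact : act (FreeMonoid.toList w) b with _ | c'
  · simp
  · simp only [Option.elim]
    have : ((t n ^ (FreeMonoid.toList w).length • e n c' : Hsp) : ℕ × Bool → ℂ) (n, c)
        = t n ^ (FreeMonoid.toList w).length * (e n c' : ℕ × Bool → ℂ) (n, c) := by
      rw [lp.coeFn_smul]; rfl
    rw [this, e_apply]
    by_cases hcc : c' = c
    · subst hcc; simp
    · rw [if_neg (show ¬ (((n, c) : ℕ × Bool) = (n, c')) by
          simp only [Prod.mk.injEq, true_and]; exact fun h => hcc h.symm), mul_zero,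
        if_neg (by simp [hcc] : ¬ ((some c' : Option Bool) = some c)), mul_zero]

/-- the polynomial collecting the coefficients of a class of words -/
def Pf (f : FreeStarAlgebra 1) (b c : Bool) : Polynomial ℂ :=
  f.coeff.sum fun w cf =>
    if act (FreeMonoid.toList w) b = some c
    then Polynomial.C cf * Polynomial.X ^ (FreeMonoid.toList w).length else 0

lemma Pf_eval (f : FreeStarAlgebra 1) (n : ℕ) (b c : Bool) :
    (Pf f b c).eval (t n)
      = f.coeff.sum fun w cf =>
          if act (FreeMonoid.toList w) b = some c
          then cf * t n ^ (FreeMonoid.toList w).length else 0 := by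
  rw [Pf, Finsupp.sum, Finsupp.sum, Polynomial.eval_finset_sum]
  refine Finset.sum_congr rfl fun w _ => ?_
  split
  · rw [Polynomial.eval_mul, Polynomial.eval_C, Polynomial.eval_pow, Polynomial.eval_X]
  · rw [Polynomial.eval_zero]

lemma Pf_eq_zero (f : FreeStarAlgebra 1) (hf : piFree f = 0) (b c : Bool) :
    Pf f b c = 0 := by
  refine Polynomial.eq_zero_of_infinite_isRoot _ ?_
  refine Set.infinite_of_injective_forall_mem (f := t) t_injective fun n => ?_
  show (Pf f b c).IsRoot (t n)
  rw [Polynomial.IsRoot, Pf_eval, ← eval_formula f n b c, hf]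
  show ((0 : Hsp) : ℕ × Bool → ℂ) (n, c) = 0
  rw [lp.coeFn_zero]; rfl

/-- key injectivity: `piFree` is injective on elements supported on alternating words. -/
lemma piFree_inj_alt (f : FreeStarAlgebra 1)
    (hsupp : ∀ w ∈ f.coeff.support, (FreeMonoid.toList w).Chain' (· ≠ ·))
    (h0 : piFree f = 0) : f = 0 := by
  ext w
  rw [MonoidAlgebra.coeff_zero, Finsupp.coe_zero, Pi.zero_apply]
  by_cases hw : w ∈ f.coeff.support
  swap
  · exact Finsupp.notMem_support_iff.1 hw
  have hcw := hsupp w hw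
  -- choose a starting bit for which the action of `w` survives
  obtain ⟨b₀, c₀, hact⟩ : ∃ b₀ c₀, act (FreeMonoid.toList w) b₀ = some c₀ := by
    rcases hl : FreeMonoid.toList w with _ | ⟨a, r⟩
    · exact ⟨true, true, rfl⟩
    · refine ⟨startBit ((a :: r).getLast (by simp)), !startBit a, ?_⟩
      exact act_alt r a (hl ▸ hcw)
  have hcoeff : (Pf f b₀ c₀).coeff (FreeMonoid.toList w).length = f.coeff w := by
    rw [Pf, Finsupp.sum, Polynomial.finset_sum_coeff]
    rw [Finset.sum_eq_single w]
    · rw [if_pos hact, Polynomial.coeff_C_mul, Polynomial.coeff_X_pow, if_pos rfl, mul_one]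
    · intro w' hw' hne
      split
      swap
      · exact Polynomial.coeff_zero _
      rw [Polynomial.coeff_C_mul, Polynomial.coeff_X_pow]
      rename_i hact'
      split
      swap
      · exact mul_zero _
      rename_i hlen
      exfalso
      apply hne
      have := act_alt_inj (FreeMonoid.toList w') (FreeMonoid.toList w) b₀ c₀
        (hsupp w' hw') hcw hact' hact hlen.symm
      exact FreeMonoid.toList.injective this
    · intro h; exact absurd hw h
  rw [← hcoeff, Pf_eq_zero f h0, Polynomial.coeff_zero]

/-! ### star compatibility -/

lemma startBit_swap (a : FreeStarLetter 1) : startBit (Sum.swap a) = !startBit a := by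
  rcases a with i | i <;> rfl

lemma letterOp_swap (a : FreeStarLetter 1) : letterOp (Sum.swap a) = star (letterOp a) := by
  rw [ContinuousLinearMap.star_eq_adjoint, letterOp, letterOp, shift_adjoint,
    startBit_swap, Bool.not_not]

lemma Phi_wordStar (w : FreeMonoid (FreeStarLetter 1)) :
    Φ (FreeStarAlgebra.wordStar w) = star (Φ w) := by
  induction w using FreeMonoid.recOn with
  | one => rw [FreeStarAlgebra.wordStar_one, map_one, star_one]
  | of_mul a xs ih =>
    rw [map_mul, FreeStarAlgebra.wordStar_mul, FreeStarAlgebra.wordStar_of, map_mul, ih,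
      star_mul]
    congr 1
    rw [Φ, FreeMonoid.lift_eval_of, FreeMonoid.lift_eval_of, letterOp_swap]

lemma piFree_star (f : FreeStarAlgebra 1) : piFree (star f) = star (piFree f) := by
  induction f using MonoidAlgebra.induction_linear with
  | zero => rw [star_zero, map_zero, star_zero]
  | add f g hf hg => rw [star_add, map_add, map_add, star_add, hf, hg]
  | single w c =>
    rw [FreeStarAlgebra.star_single, piFree_single, piFree_single, star_smul, Phi_wordStar]
    rfl

/-! ### the relations are satisfied -/

lemma shift_sq (c : Bool) : shift c * shift c = 0 := by
  ext g i
  obtain ⟨m, d⟩ := i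
  show (shift c (shift c g) : ℕ × Bool → ℂ) (m, d) = ((0 : Hsp) : ℕ × Bool → ℂ) (m, d)
  rw [shift_apply, lp.coeFn_zero]
  show _ = (0 : ℂ)
  split
  · rename_i h
    have h' : d = c := h
    rw [shift_apply]
    rw [if_neg (show ¬ (((m, !d) : ℕ × Bool).2 = c) by simp [h']), mul_zero]
  · rfl

lemma piFree_x : piFree x = shift false := by
  rw [x, FreeStarAlgebra.gen, piFree_single, one_smul, Φ, FreeMonoid.lift_eval_of]
  rfl

lemma piFree_star_x : piFree (star x) = shift true := by
  rw [x, FreeStarAlgebra.star_gen, piFree_single, one_smul, Φ, FreeMonoid.lift_eval_of]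
  rfl

lemma piFree_rel : ∀ ⦃a b : FreeStarAlgebra 1⦄, rel a b → piFree a = piFree b := by
  rintro a b ⟨(rfl | rfl), rfl⟩
  · rw [map_mul, map_zero, piFree_x, shift_sq]
  · rw [map_mul, map_zero, piFree_star_x, shift_sq]

/-! ### descending to the quotient -/

/-- The representation of `Axx`. -/
def piQ : Axx →ₐ[ℂ] (Hsp →L[ℂ] Hsp) :=
  RingQuot.liftAlgHom ℂ ⟨piFree, piFree_rel⟩

lemma piQ_mk (a : FreeStarAlgebra 1) :
    piQ (RingQuot.mkAlgHom ℂ rel a) = piFree a :=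
  RingQuot.liftAlgHom_mkAlgHom_apply ℂ piFree piFree_rel a

lemma star_mkAlgHom (a : FreeStarAlgebra 1) :
    star (RingQuot.mkAlgHom ℂ rel a) = RingQuot.mkAlgHom ℂ rel (star a) := by
  have h : star (⟨Quot.mk _ a⟩ : RingQuot rel) = ⟨Quot.mk _ (star a)⟩ := rfl
  simp only [RingQuot.mkAlgHom_def, RingQuot.mkRingHom_def, RingHom.coe_mk, MonoidHom.coe_mk,
    OneHom.coe_mk, AlgHom.coe_mk]
  exact h

/-- The star-representation of `Axx`. -/
def piQS : Axx →⋆ₐ[ℂ] (Hsp →L[ℂ] Hsp) :=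
  { piQ with
    map_star' := by
      intro a
      obtain ⟨f, rfl⟩ := RingQuot.mkAlgHom_surjective ℂ rel a
      show piQ (star (RingQuot.mkAlgHom ℂ rel f)) = star (piQ (RingQuot.mkAlgHom ℂ rel f))
      rw [star_mkAlgHom, piQ_mk, piQ_mk, piFree_star] }

/-! ### normal form in the quotient -/

lemma mk_single_not_alt_one :
    ∀ (l : List (FreeStarLetter 1)), ¬ l.Chain' (· ≠ ·) →
      RingQuot.mkAlgHom ℂ rel (MonoidAlgebra.single (FreeMonoid.ofList l) 1) = 0 := by
  intro l
  induction l with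
  | nil => intro h; exact absurd List.isChain_nil h
  | cons a l' ih =>
    intro h
    rw [List.Chain', List.isChain_cons] at h
    by_cases hc : l'.Chain' (· ≠ ·)
    · have h2 : ¬ (∀ y ∈ l'.head?, a ≠ y) := fun hall => h ⟨hall, hc⟩
      push_neg at h2
      obtain ⟨y, hy, hay⟩ := h2
      -- l' has head a
      rcases l' with _ | ⟨a', l''⟩
      · simp at hy
      have hya : y = a' := by simpa [eq_comm] using hy
      subst hya; subst hay
      -- word is a :: a :: l''
      have hsplit : (MonoidAlgebra.single (FreeMonoid.ofList (a :: a :: l'')) 1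
            : FreeStarAlgebra 1)
          = (MonoidAlgebra.single (FreeMonoid.of a) 1 * MonoidAlgebra.single (FreeMonoid.of a) 1)
            * MonoidAlgebra.single (FreeMonoid.ofList l'') 1 := by
        rw [MonoidAlgebra.single_mul_single, MonoidAlgebra.single_mul_single, one_mul, one_mul]
        rfl
      rw [hsplit, map_mul]
      have hzero : RingQuot.mkAlgHom ℂ rel
          (MonoidAlgebra.single (FreeMonoid.of a) 1 * MonoidAlgebra.single (FreeMonoid.of a) 1)
          = 0 := by
        rcases a with i | i
        · have hi : i = 0 := Subsingleton.elim i 0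
          subst hi
          have hx : (MonoidAlgebra.single (FreeMonoid.of (Sum.inl (0 : Fin 1)))
              (1:ℂ) : FreeStarAlgebra 1) = x := rfl
          rw [hx]
          have hr := RingQuot.mkAlgHom_rel (S := ℂ) (s := rel) (x := x * x) (y := 0)
            ⟨Or.inl rfl, rfl⟩
          rw [hr, map_zero]
        · have hi : i = 0 := Subsingleton.elim i 0
          subst hi
          have hx : (MonoidAlgebra.single (FreeMonoid.of (Sum.inr (0 : Fin 1)))
              (1:ℂ) : FreeStarAlgebra 1) = star x := by
            rw [x, FreeStarAlgebra.star_gen]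
          rw [hx]
          have hr := RingQuot.mkAlgHom_rel (S := ℂ) (s := rel) (x := star x * star x) (y := 0)
            ⟨Or.inr rfl, rfl⟩
          rw [hr, map_zero]
      rw [hzero, zero_mul]
    · have hsplit : (MonoidAlgebra.single (FreeMonoid.ofList (a :: l')) 1 : FreeStarAlgebra 1)
          = MonoidAlgebra.single (FreeMonoid.of a) 1
            * MonoidAlgebra.single (FreeMonoid.ofList l') 1 := by
        rw [MonoidAlgebra.single_mul_single, one_mul]
        rfl
      rw [hsplit, map_mul, ih hc, mul_zero]

lemma mk_single_not_alt (w : FreeMonoid (FreeStarLetter 1))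
    (hw : ¬ (FreeMonoid.toList w).Chain' (· ≠ ·)) (c : ℂ) :
    RingQuot.mkAlgHom ℂ rel (MonoidAlgebra.single w c) = 0 := by
  have h1 : (MonoidAlgebra.single w c : FreeStarAlgebra 1)
      = c • MonoidAlgebra.single w 1 := by
    rw [MonoidAlgebra.smul_single, smul_eq_mul, mul_one]
  have h2 : FreeMonoid.ofList (FreeMonoid.toList w) = w := rfl
  rw [h1, map_smul, ← h2, mk_single_not_alt_one _ hw, smul_zero]

open Classical in
lemma exists_alt_rep (a : Axx) :
    ∃ f : FreeStarAlgebra 1, (∀ w ∈ f.coeff.support, (FreeMonoid.toList w).Chain' (· ≠ ·)) ∧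
      RingQuot.mkAlgHom ℂ rel f = a := by
  obtain ⟨g, rfl⟩ := RingQuot.mkAlgHom_surjective ℂ rel a
  refine ⟨MonoidAlgebra.ofCoeff (g.coeff.filter (fun w => (FreeMonoid.toList w).Chain' (· ≠ ·))), fun w hw => ?_, ?_⟩
  · by_contra hp
    exact Finsupp.mem_support_iff.1 hw (Finsupp.filter_apply_neg _ g.coeff hp)
  · have hdecomp : MonoidAlgebra.ofCoeff (g.coeff.filter (fun w => (FreeMonoid.toList w).Chain' (· ≠ ·)))
        + MonoidAlgebra.ofCoeff (g.coeff.filter (fun w => ¬ (FreeMonoid.toList w).Chain' (· ≠ ·))) = g := by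
      rw [← MonoidAlgebra.ofCoeff_add, Finsupp.filter_pos_add_filter_neg]
    conv_rhs => rw [← hdecomp]
    rw [map_add, left_eq_add]
    set h := MonoidAlgebra.ofCoeff (g.coeff.filter (fun w => ¬ (FreeMonoid.toList w).Chain' (· ≠ ·))) with hh
    have hsum : h = h.coeff.sum (fun w c => MonoidAlgebra.single w c) := (MonoidAlgebra.sum_coeff_single h).symm
    rw [hsum, map_finsuppSum, Finsupp.sum]
    refine Finset.sum_eq_zero fun w hw => ?_
    have hna : ¬ (FreeMonoid.toList w).Chain' (· ≠ ·) := by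
      by_contra hpw
      exact Finsupp.mem_support_iff.1 hw
        (Finsupp.filter_apply_neg _ g.coeff (not_not_intro hpw))
    exact mk_single_not_alt w hna _

end Hsp


/-- the `*`-algebra `ℂ⟨x, x* | x² = 0, x*² = 0⟩` is C*-representable. -/
theorem axx_cstarRepresentable : CStarRepresentable Axx := by
  refine ⟨Hsp, inferInstance, inferInstance, inferInstance, Hsp.piQS, ?_⟩
  rw [injective_iff_map_eq_zero]
  intro a ha
  obtain ⟨f, hsupp, rfl⟩ := Hsp.exists_alt_rep a
  have h0 : Hsp.piFree f = 0 := by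
    rw [← Hsp.piQ_mk]
    exact ha
  rw [Hsp.piFree_inj_alt f hsupp h0, map_zero]

end Stmt16
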